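/- Let μ, ν be probability measures on ℝ, with μ having no atoms, and suppose there exists a coupling γ of μ and ν supported in {(s,t) : s − t ∈ [a,b]} for a closed interval [a,b]. Then the monotone (nondecreasing) transport map T from μ to ν also satisfies s − T(s) ∈ [a,b] for μ-a.e. s. -/

import Mathlib

open MeasureTheory

lemma null_flat (μ : Measure ℝ) [IsFiniteMeasure μ] [NullSingletonClass μ] :
    μ {s : ℝ | ∃ u < s, μ (Set.Ioc u s) = 0} = 0 := by
  have hsub : {s : ℝ | ∃ u < s, μ (Set.Ioc u s) = 0} ⊆
      ⋃ q : ℚ, {s : ℝ | (q : ℝ) < s ∧ μ (Set.Ioc (q : ℝ) s) = 0} := by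
    intro s hs
    obtain ⟨u, hu, hnull⟩ := hs
    obtain ⟨q, hq1, hq2⟩ := exists_rat_btwn hu
    exact Set.mem_iUnion.2 ⟨q, hq2,
      measure_mono_null (Set.Ioc_subset_Ioc_left hq1.le) hnull⟩
  refine measure_mono_null hsub (measure_iUnion_null fun q => ?_)
  set C := {s : ℝ | (q : ℝ) < s ∧ μ (Set.Ioc (q : ℝ) s) = 0} with hC
  rcases C.eq_empty_or_nonempty with h | hne
  · simp [h]
  by_cases hbdd : BddAbove C
  · set r := sSup C with hr
    have hsubC : C ⊆ Set.Ioo (q : ℝ) r ∪ {r} := by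
      intro s hs
      rcases lt_or_eq_of_le (le_csSup hbdd hs) with h | h
      · exact Or.inl ⟨hs.1, h⟩
      · exact Or.inr h
    refine measure_mono_null hsubC ?_
    obtain ⟨u, hmono, htend, hmem⟩ := exists_seq_tendsto_sSup hne hbdd
    have hIoo : Set.Ioo (q : ℝ) r ⊆ ⋃ n : ℕ, Set.Ioc (q : ℝ) (u n) := by
      intro x hx
      have : ∀ᶠ n in Filter.atTop, x < u n :=
        htend.eventually (eventually_gt_nhds hx.2)
      obtain ⟨n, hn⟩ := this.exists
      exact Set.mem_iUnion.2 ⟨n, hx.1, hn.le⟩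
    have h1 : μ (Set.Ioo (q : ℝ) r) = 0 :=
      measure_mono_null hIoo (measure_iUnion_null fun n => (hmem n).2)
    refine le_antisymm ?_ zero_le
    calc μ (Set.Ioo (q : ℝ) r ∪ {r}) ≤ μ (Set.Ioo (q : ℝ) r) + μ {r} :=
          measure_union_le _ _
      _ = 0 := by rw [h1, measure_singleton, add_zero]
  · have hchoice : ∀ n : ℕ, ∃ s ∈ C, (n : ℝ) < s := by
      intro n
      obtain ⟨s, hs, hns⟩ := not_bddAbove_iff.1 hbdd (n : ℝ)
      exact ⟨s, hs, hns⟩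
    choose f hfC hf using hchoice
    have hIoi : Set.Ioi (q : ℝ) ⊆ ⋃ n : ℕ, Set.Ioc (q : ℝ) (f n) := by
      intro x hx
      obtain ⟨n, hn⟩ := exists_nat_gt x
      exact Set.mem_iUnion.2 ⟨n, hx, (hn.trans (hf n)).le⟩
    have h1 : μ (Set.Ioi (q : ℝ)) = 0 :=
      measure_mono_null hIoi (measure_iUnion_null fun n => (hfC n).2)
    exact measure_mono_null (fun s hs => hs.1) h1

/-- The monotone (nondecreasing) transport map `T = G⁻¹ ∘ F`, where `F` is the cdf of `μ`
and `G⁻¹` the generalized inverse of the cdf of `ν`. -/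
noncomputable def monotoneMap (μ ν : Measure ℝ) (s : ℝ) : ℝ :=
  sInf {t : ℝ | (μ (Set.Iic s)).toReal ≤ (ν (Set.Iic t)).toReal}

/-- if some coupling of `μ` (atomless) and `ν` is supported in
`{(s,t) : s − t ∈ [a,b]}`, then the monotone transport map `T` from `μ` to `ν` satisfies
`s − T(s) ∈ [a,b]` for `μ`-a.e. `s`. -/
theorem stmt13 (μ ν : Measure ℝ) [IsProbabilityMeasure μ] [IsProbabilityMeasure ν]
    [NullSingletonClass μ] (a b : ℝ)
    (γ : Measure (ℝ × ℝ)) [IsProbabilityMeasure γ]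
    (hfst : γ.fst = μ) (hsnd : γ.snd = ν)
    (hsupp : γ {p : ℝ × ℝ | p.1 - p.2 ∈ Set.Icc a b}ᶜ = 0) :
    ∀ᵐ s ∂μ, s - monotoneMap μ ν s ∈ Set.Icc a b := by
  set S := {p : ℝ × ℝ | p.1 - p.2 ∈ Set.Icc a b} with hS
  -- cdf inequalities from the coupling
  have key1 : ∀ s : ℝ, μ (Set.Iic s) ≤ ν (Set.Iic (s - a)) := by
    intro s
    have h1 : μ (Set.Iic s) = γ (Prod.fst ⁻¹' Set.Iic s) := by
      rw [← hfst, Measure.fst_apply measurableSet_Iic]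
    have h2 : ν (Set.Iic (s - a)) = γ (Prod.snd ⁻¹' Set.Iic (s - a)) := by
      rw [← hsnd, Measure.snd_apply measurableSet_Iic]
    rw [h1, h2]
    have hincl : Prod.fst ⁻¹' Set.Iic s ⊆ (Prod.snd ⁻¹' Set.Iic (s - a)) ∪ Sᶜ := by
      intro p hp
      by_cases hpS : p ∈ S
      · left
        simp only [Set.mem_preimage, Set.mem_Iic] at hp ⊢
        have ha := hpS.1
        linarith
      · exact Or.inr hpS
    calc γ (Prod.fst ⁻¹' Set.Iic s)
        ≤ γ ((Prod.snd ⁻¹' Set.Iic (s - a)) ∪ Sᶜ) := measure_mono hincl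
      _ ≤ γ (Prod.snd ⁻¹' Set.Iic (s - a)) + γ Sᶜ := measure_union_le _ _
      _ = γ (Prod.snd ⁻¹' Set.Iic (s - a)) := by rw [hsupp, add_zero]
  have key2 : ∀ t : ℝ, ν (Set.Iic t) ≤ μ (Set.Iic (t + b)) := by
    intro t
    have h1 : ν (Set.Iic t) = γ (Prod.snd ⁻¹' Set.Iic t) := by
      rw [← hsnd, Measure.snd_apply measurableSet_Iic]
    have h2 : μ (Set.Iic (t + b)) = γ (Prod.fst ⁻¹' Set.Iic (t + b)) := by
      rw [← hfst, Measure.fst_apply measurableSet_Iic]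
    rw [h1, h2]
    have hincl : Prod.snd ⁻¹' Set.Iic t ⊆ (Prod.fst ⁻¹' Set.Iic (t + b)) ∪ Sᶜ := by
      intro p hp
      by_cases hpS : p ∈ S
      · left
        simp only [Set.mem_preimage, Set.mem_Iic] at hp ⊢
        have hb := hpS.2
        linarith
      · exact Or.inr hpS
    calc γ (Prod.snd ⁻¹' Set.Iic t)
        ≤ γ ((Prod.fst ⁻¹' Set.Iic (t + b)) ∪ Sᶜ) := measure_mono hincl
      _ ≤ γ (Prod.fst ⁻¹' Set.Iic (t + b)) + γ Sᶜ := measure_union_le _ _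
      _ = γ (Prod.fst ⁻¹' Set.Iic (t + b)) := by rw [hsupp, add_zero]
  rw [ae_iff]
  refine measure_mono_null ?_ (null_flat μ)
  intro s hs
  simp only [Set.mem_setOf_eq] at hs ⊢
  by_contra hcon
  push_neg at hcon
  apply hs
  -- notation
  set E := {t : ℝ | (μ (Set.Iic s)).toReal ≤ (ν (Set.Iic t)).toReal} with hE
  have hmem : s - a ∈ E :=
    ENNReal.toReal_mono (measure_ne_top ν _) (key1 s)
  -- F s > 0
  have hFpos : 0 < (μ (Set.Iic s)).toReal := by
    refine ENNReal.toReal_pos (fun h0 => ?_) (measure_ne_top μ _)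
    exact hcon (s - 1) (by linarith)
      (measure_mono_null (Set.Ioc_subset_Iic_self) h0)
  -- E is bounded below
  have htend : Filter.Tendsto (fun n : ℕ => (ν (Set.Iic (-(n : ℝ)))).toReal)
      Filter.atTop (nhds 0) := by
    have h : Filter.Tendsto (fun n : ℕ => ν (Set.Iic (-(n : ℝ)))) Filter.atTop
        (nhds (ν (⋂ n : ℕ, Set.Iic (-(n : ℝ))))) :=
      tendsto_measure_iInter_atTop
        (fun n => measurableSet_Iic.nullMeasurableSet)
        (fun m n hmn => Set.Iic_subset_Iic.2 (by exact_mod_cast neg_le_neg (by exact_mod_cast hmn)))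
        ⟨0, measure_ne_top ν _⟩
    have hempty : (⋂ n : ℕ, Set.Iic (-(n : ℝ))) = ∅ := by
      ext x
      simp only [Set.mem_iInter, Set.mem_Iic, Set.mem_empty_iff_false, iff_false, not_forall,
        not_le]
      obtain ⟨n, hn⟩ := exists_nat_gt (-x)
      exact ⟨n, by linarith⟩
    rw [hempty, measure_empty] at h
    have := (ENNReal.tendsto_toReal (by norm_num : (0 : ENNReal) ≠ ⊤)).comp h
    simpa [Function.comp_def] using this
  have hbddE : BddBelow E := by
    obtain ⟨n0, ht0⟩ := (htend.eventually (eventually_lt_nhds hFpos)).exists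
    set t0 : ℝ := -(n0 : ℝ)
    refine ⟨t0, fun t ht => ?_⟩
    by_contra hlt
    push_neg at hlt
    have : (ν (Set.Iic t)).toReal ≤ (ν (Set.Iic t0)).toReal :=
      ENNReal.toReal_mono (measure_ne_top ν _)
        (measure_mono (Set.Iic_subset_Iic.2 hlt.le))
    have := ht.trans this
    linarith
  have hle : sInf E ≤ s - a := csInf_le hbddE hmem
  have hge : s - b ≤ sInf E := by
    refine le_csInf ⟨s - a, hmem⟩ fun t ht => ?_
    by_contra hlt
    push_neg at hlt
    have htb : t + b < s := by linarith
    have hIoc : μ (Set.Ioc (t + b) s) ≠ 0 := hcon (t + b) htb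
    have hsplit : μ (Set.Iic s) = μ (Set.Iic (t + b)) + μ (Set.Ioc (t + b) s) := by
      rw [← measure_union (Set.Iic_disjoint_Ioc le_rfl) measurableSet_Ioc,
        Set.Iic_union_Ioc_eq_Iic htb.le]
    have hlt2 : μ (Set.Iic (t + b)) < μ (Set.Iic s) := by
      rw [hsplit]
      exact ENNReal.lt_add_right (measure_ne_top μ _) hIoc
    have hlt3 : (μ (Set.Iic (t + b))).toReal < (μ (Set.Iic s)).toReal :=
      (ENNReal.toReal_lt_toReal (measure_ne_top μ _) (measure_ne_top μ _)).2 hlt2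
    have h4 : (ν (Set.Iic t)).toReal ≤ (μ (Set.Iic (t + b))).toReal :=
      ENNReal.toReal_mono (measure_ne_top μ _) (key2 t)
    have h5 : (μ (Set.Iic s)).toReal ≤ (ν (Set.Iic t)).toReal := ht
    linarith
  have : monotoneMap μ ν s = sInf E := rfl
  rw [this]
  exact ⟨by linarith, by linarith⟩
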